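/- Let A ∈ SL(2,ℤ) be parabolic, i.e. |Tr(A)| = 2. Then there exists n ∈ ℤ such that A is conjugate in SL(2,ℤ) either to I_n = [[1,n],[0,1]] or to I_n* = [[-1,-n],[0,-1]]. -/

import Mathlib

/-- The special linear group `SL(2,ℤ)`. -/
abbrev SL2Z := Matrix.SpecialLinearGroup (Fin 2) ℤ

/-- `A ∈ SL(2,ℤ)` is conjugate in `SL(2,ℤ)` to the matrix `B`. -/
def IsConjToZ (A : SL2Z) (B : Matrix (Fin 2) (Fin 2) ℤ) : Prop :=
  ∃ P : SL2Z, A.val = P.val * B * (P⁻¹).val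

/-- An element of `SL(2,ℤ)` with trace exactly `2` is conjugate to some `I_n`. -/
lemma conj_trace_two (A : SL2Z) (htr : Matrix.trace A.val = 2) :
    ∃ n : ℤ, IsConjToZ A !![1, n; 0, 1] := by
  set a := A.val 0 0 with ha
  set b := A.val 0 1 with hb
  set c := A.val 1 0 with hc
  set d := A.val 1 1 with hd
  have hAval : A.val = !![a, b; c, d] := by rw [Matrix.eta_fin_two A.val]
  have had : a + d = 2 := by
    have := htr; rw [Matrix.trace_fin_two] at this; exact this
  have hdet : a * d - b * c = 1 := by
    have := A.property; rw [Matrix.det_fin_two] at this; exact this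
  by_cases hc0 : c = 0
  · have had1 : a * d = 1 := by rw [hc0] at hdet; linarith
    have ha1 : a = 1 := by
      rcases Int.isUnit_iff.mp (IsUnit.of_mul_eq_one (a := a) d had1) with h | h
      · exact h
      · rw [h] at had1; nlinarith
    have hd1 : d = 1 := by nlinarith
    refine ⟨b, 1, ?_⟩
    simp [hAval, ha1, hd1, hc0]
  · set g : ℤ := (Int.gcd (a-1) c : ℤ) with hgdef
    have hgpos : 0 < Int.gcd (a-1) c := Int.gcd_pos_of_ne_zero_right _ hc0
    have hg0 : g ≠ 0 := by positivity
    set x : ℤ := (a-1) / g with hxdef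
    set z : ℤ := c / g with hzdef
    have hax : g * x = a - 1 := Int.mul_ediv_cancel' (Int.gcd_dvd_left _ _)
    have hcz : g * z = c := Int.mul_ediv_cancel' (Int.gcd_dvd_right _ _)
    have hz0 : z ≠ 0 := by intro h; rw [h, mul_zero] at hcz; exact hc0 hcz.symm
    have hcop : Int.gcd x z = 1 := Int.gcd_div_gcd_div_gcd hgpos
    set u : ℤ := Int.gcdA x z with hu
    set v : ℤ := Int.gcdB x z with hv
    have hbez : x * u + z * v = 1 := by
      have := Int.gcd_eq_gcd_ab x z
      rw [hcop] at this; exact_mod_cast this.symm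
    -- b * z = -(g * x^2)
    have hbz : b * z = -(g * x ^ 2) := by
      apply mul_left_cancel₀ hg0
      linear_combination b * hcz - hdet + (g * x + a - 1) * hax + a * had
    -- z ∣ g
    have hzg : z ∣ g := by
      have hcp : IsCoprime (z : ℤ) x := by
        rw [Int.isCoprime_iff_gcd_eq_one, Int.gcd_comm]; exact hcop
      have : z ∣ g * x ^ 2 := ⟨-b, by linarith [hbz]⟩
      exact (hcp.pow_right (n := 2)).dvd_of_dvd_mul_right this
    set n : ℤ := -(g / z) with hn
    have hzn : z * n = -g := by
      rw [hn, mul_neg, Int.mul_ediv_cancel' hzg]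
    refine ⟨n, ⟨!![x, -v; z, u], by
      rw [Matrix.det_fin_two_of]; ring_nf; linear_combination hbez⟩, ?_⟩
    set P : SL2Z := (⟨!![x, -v; z, u], by
      rw [Matrix.det_fin_two_of]; ring_nf; linear_combination hbez⟩ : SL2Z) with hP
    have e00 : a * x + b * z = x := by linear_combination hbz - x * hax
    have e01 : -(a * v) + b * u = x * n - v := by
      apply mul_left_cancel₀ hz0
      linear_combination u * hbz - x * hzn + v * z * hax - g * x * hbez
    have e10 : c * x + d * z = z := by linear_combination -x * hcz + z * had + z * hax
    have e11 : -(c * v) + d * u = z * n + u := by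
      linear_combination v * hcz + u * had - hzn - g * hbez + u * hax
    have key : A.val * P.val = P.val * !![1, n; 0, 1] := by
      show A.val * !![x, -v; z, u] = !![x, -v; z, u] * !![1, n; 0, 1]
      rw [hAval]
      ext i j
      fin_cases i <;> fin_cases j <;>
        simp [Matrix.mul_apply, Fin.sum_univ_succ]
      · linear_combination e00
      · linear_combination e01
      · linear_combination e10
      · linear_combination e11
    have hPP : P.val * (P⁻¹).val = 1 := by
      rw [← Matrix.SpecialLinearGroup.coe_mul, mul_inv_cancel,
        Matrix.SpecialLinearGroup.coe_one]
    calc A.val = A.val * (P.val * (P⁻¹).val) := by rw [hPP, mul_one]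
    _ = (A.val * P.val) * (P⁻¹).val := by rw [mul_assoc]
    _ = (P.val * !![1, n; 0, 1]) * (P⁻¹).val := by rw [key]
    _ = P.val * !![1, n; 0, 1] * (P⁻¹).val := rfl

/-- A parabolic element of `SL(2,ℤ)` (i.e. `|Tr A| = 2`) is conjugate in `SL(2,ℤ)` to
`I_n = [[1,n],[0,1]]` or to `I_n* = [[-1,-n],[0,-1]]` for some `n ∈ ℤ`. -/
theorem parabolic_SL2Z_classification (A : SL2Z)
    (hA : |Matrix.trace A.val| = 2) :
    ∃ n : ℤ, IsConjToZ A !![1, n; 0, 1] ∨ IsConjToZ A !![-1, -n; 0, -1] := by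
  rcases abs_eq (by norm_num : (0:ℤ) ≤ 2) |>.mp hA with h | h
  · obtain ⟨n, hn⟩ := conj_trace_two A h
    exact ⟨n, Or.inl hn⟩
  · have hdet : (-A.val).det = 1 := by
      rw [Matrix.det_neg]
      simp [A.property]
    set B : SL2Z := ⟨-A.val, hdet⟩ with hB
    have htrB : Matrix.trace B.val = 2 := by
      show Matrix.trace (-A.val) = 2
      rw [Matrix.trace_neg, h]; ring
    obtain ⟨n, P, hP⟩ := conj_trace_two B htrB
    refine ⟨n, Or.inr ⟨P, ?_⟩⟩
    have hBval : B.val = -A.val := rfl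
    have hneg : !![(-1 : ℤ), -n; 0, -1] = -(!![1, n; 0, 1]) := by
      ext i j; fin_cases i <;> fin_cases j <;> simp
    rw [hneg, Matrix.mul_neg, Matrix.neg_mul]
    rw [hBval] at hP
    rw [← hP, neg_neg]
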